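/- Suppose G and H are good graphs. Then γ(G □ H) = γ(G)·γ(H) if and only if G □ H is good. -/

import Mathlib

open SimpleGraph Finset

/-- A pebbling step: remove two pebbles from `u` and place one on an adjacent vertex `v`. -/
def PebblingStep {V : Type*} [DecidableEq V] (G : SimpleGraph V) (D D' : V → ℕ) : Prop :=
  ∃ u v, G.Adj u v ∧ 2 ≤ D u ∧
    D' = fun w => if w = u then D u - 2 else if w = v then D v + 1 else D w

/-- A distribution is coverable if pebbling steps can put a pebble on every vertex. -/
def Coverable {V : Type*} [DecidableEq V] (G : SimpleGraph V) (D : V → ℕ) : Prop :=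
  ∃ D', Relation.ReflTransGen (PebblingStep G) D D' ∧ ∀ v, 1 ≤ D' v

/-- The cover pebbling number: the least `N` such that every distribution of `N` pebbles
is coverable. -/
noncomputable def coverPebblingNumber {V : Type*} [DecidableEq V] [Fintype V]
    (G : SimpleGraph V) : ℕ :=
  sInf {N | ∀ D : V → ℕ, ∑ v, D v = N → Coverable G D}

/-- A color-respecting pebbling step on a colored distribution. -/
def ColorStep {V C : Type*} [DecidableEq V] [DecidableEq C] (G : SimpleGraph V)
    (D D' : V → C → ℕ) : Prop :=
  ∃ u v c, G.Adj u v ∧ 2 ≤ D u c ∧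
    D' = fun w d => if w = u ∧ d = c then D u c - 2
      else if w = v ∧ d = c then D v c + 1 else D w d

/-- A colored distribution is `Q`-coverable if color-respecting steps can put at least `Q`
pebbles on every vertex. -/
def QCoverable {V C : Type*} [DecidableEq V] [DecidableEq C] [Fintype C] (G : SimpleGraph V)
    (Q : ℕ) (D : V → C → ℕ) : Prop :=
  ∃ D', Relation.ReflTransGen (ColorStep G) D D' ∧ ∀ v, Q ≤ ∑ c, D' v c

/-- A graph is good if its cover pebbling number is realized by a simple distribution. -/
def IsGood {V : Type*} [DecidableEq V] [Fintype V] (G : SimpleGraph V) : Prop :=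
  ∃ u : V, coverPebblingNumber G = ∑ w : V, 2 ^ G.dist u w

section Aux

variable {V : Type*} [DecidableEq V] [Fintype V] {K : SimpleGraph V}

/-- A single pebbling step can be mirrored on a pointwise-larger distribution. -/
lemma pebblingStep_mono {A B D : V → ℕ} (h : PebblingStep K A B) (hle : ∀ w, A w ≤ D w) :
    ∃ D', PebblingStep K D D' ∧ ∀ w, B w ≤ D' w := by
  obtain ⟨x, y, hadj, h2, rfl⟩ := h
  refine ⟨fun w => if w = x then D x - 2 else if w = y then D y + 1 else D w,
    ⟨x, y, hadj, le_trans h2 (hle x), rfl⟩, fun w => ?_⟩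
  have h1 := hle w; have h2' := hle x; have h3 := hle y
  dsimp only
  split_ifs <;> omega

lemma reflTransGen_mono {A B : V → ℕ} (h : Relation.ReflTransGen (PebblingStep K) A B) :
    ∀ D : V → ℕ, (∀ w, A w ≤ D w) →
      ∃ D', Relation.ReflTransGen (PebblingStep K) D D' ∧ ∀ w, B w ≤ D' w := by
  induction h using Relation.ReflTransGen.head_induction_on with
  | refl => exact fun D hle => ⟨D, Relation.ReflTransGen.refl, hle⟩
  | head hstep _ ih =>
    intro D hle
    obtain ⟨Dm, hstep', hlem⟩ := pebblingStep_mono hstep hle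
    obtain ⟨D', hchain, hle'⟩ := ih Dm hlem
    exact ⟨D', Relation.ReflTransGen.head hstep' hchain, hle'⟩

lemma coverable_mono {A D : V → ℕ} (hle : ∀ w, A w ≤ D w) (h : Coverable K A) :
    Coverable K D := by
  obtain ⟨B, hchain, hcov⟩ := h
  obtain ⟨D', hchain', hle'⟩ := reflTransGen_mono hchain D hle
  exact ⟨D', hchain', fun v => le_trans (hcov v) (hle' v)⟩

/-- The potential `∑ w, D w * f w` does not increase under a pebbling step, when
`f` at most doubles along edges. -/
lemma potential_step {f : V → ℕ} (hf : ∀ x y, K.Adj x y → f y ≤ 2 * f x)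
    {D D' : V → ℕ} (h : PebblingStep K D D') :
    ∑ w, D' w * f w ≤ ∑ w, D w * f w := by
  obtain ⟨x, y, hadj, h2, rfl⟩ := h
  dsimp only
  have hxy : x ≠ y := hadj.ne
  have key : ∑ w, ((if w = x then D x - 2 else if w = y then D y + 1 else D w) * f w
      + (if w = x then 2 * f x else 0))
      = ∑ w, (D w * f w + (if w = y then f y else 0)) := by
    apply Finset.sum_congr rfl
    intro w _
    split_ifs with hwx hwy hwy
    · exact absurd (hwx.symm.trans hwy) hxy
    · subst hwx
      have : (D w - 2) * f w + 2 * f w = (D w - 2 + 2) * f w := by ring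
      rw [this, Nat.sub_add_cancel h2, add_zero]
    · subst hwy; ring
    · ring
  have e1 : ∑ w, (if w = x then 2 * f x else 0) = 2 * f x := by simp
  have e2 : ∑ w, (if w = y then f y else 0) = f y := by simp
  rw [Finset.sum_add_distrib, Finset.sum_add_distrib, e1, e2] at key
  have := hf x y hadj
  omega

lemma potential_chain {f : V → ℕ} (hf : ∀ x y, K.Adj x y → f y ≤ 2 * f x)
    {D D' : V → ℕ} (h : Relation.ReflTransGen (PebblingStep K) D D') :
    ∑ w, D' w * f w ≤ ∑ w, D w * f w := by
  induction h with
  | refl => exact le_rfl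
  | tail hstep ih => exact le_trans (potential_step hf ih) ‹_›
  
/-- The canonical distribution with one fewer pebble than σ(u) is not coverable. -/
lemma not_coverable_sigma (hK : K.Connected) (u : V) :
    ¬ Coverable K (fun v => if v = u then (∑ w, 2 ^ K.dist u w) - 1 else 0) := by
  set f : V → ℕ := fun w => 2 ^ K.dist u w with hfdef
  have hf : ∀ x y, K.Adj x y → f y ≤ 2 * f x := by
    intro x y hxy
    have h1 : K.dist u y ≤ K.dist u x + 1 := by
      have := hK.dist_triangle (u := u) (v := x) (w := y)
      have hd : K.dist x y ≤ 1 := by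
        have := SimpleGraph.dist_le hxy.toWalk
        simpa using this
      omega
    calc f y = 2 ^ K.dist u y := rfl
      _ ≤ 2 ^ (K.dist u x + 1) := Nat.pow_le_pow_right (by norm_num) h1
      _ = 2 * f x := by rw [pow_succ]; ring
  rintro ⟨D', hchain, hcov⟩
  have hup : ∑ w, D' w * f w ≤ ∑ w, (if w = u then (∑ w, f w) - 1 else 0) * f w :=
    potential_chain hf hchain
  have hinit : ∑ w, (if w = u then (∑ w, f w) - 1 else 0) * f w = (∑ w, f w) - 1 := by
    simp [ite_mul, hfdef, SimpleGraph.dist_self]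
  have hlow : ∑ w, f w ≤ ∑ w, D' w * f w := by
    apply Finset.sum_le_sum
    intro i _
    have := hcov i
    calc f i = 1 * f i := (one_mul _).symm
      _ ≤ D' i * f i := Nat.mul_le_mul_right _ (hcov i)
  have hpos : 1 ≤ ∑ w, f w := by
    have : f u = 1 := by simp [hfdef, SimpleGraph.dist_self]
    calc 1 = f u := this.symm
      _ ≤ ∑ w, f w :=
        Finset.single_le_sum (f := f) (fun i _ => Nat.zero_le _) (Finset.mem_univ u)
  omega

lemma mem_upclosed {N : ℕ} (h : N ∈ {N | ∀ D : V → ℕ, ∑ v, D v = N → Coverable K D}) :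
    N + 1 ∈ {N | ∀ D : V → ℕ, ∑ v, D v = N → Coverable K D} := by
  intro D hsum
  have : ∃ v, D v ≠ 0 := by
    by_contra hc
    push_neg at hc
    simp [hc] at hsum
  obtain ⟨v, hv⟩ := this
  set D₀ : V → ℕ := fun w => if w = v then D v - 1 else D w with hD₀
  have hsum₀ : ∑ w, D₀ w = N := by
    have : ∑ w, (D₀ w + if w = v then 1 else 0) = ∑ w, D w := by
      apply Finset.sum_congr rfl
      intro w _
      by_cases hwv : w = v <;> simp [hD₀, hwv] <;> omega
    rw [Finset.sum_add_distrib, Finset.sum_ite_eq' Finset.univ v (fun _ => 1)] at this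
    simp at this
    omega
  have hle : ∀ w, D₀ w ≤ D w := by
    intro w; by_cases hwv : w = v <;> simp [hD₀, hwv] <;> omega
  exact coverable_mono hle (h D₀ hsum₀)

lemma upclosed {N m : ℕ} (h : N ∈ {N | ∀ D : V → ℕ, ∑ v, D v = N → Coverable K D})
    (hm : N ≤ m) : m ∈ {N | ∀ D : V → ℕ, ∑ v, D v = N → Coverable K D} := by
  induction m, hm using Nat.le_induction with
  | base => exact h
  | succ m _ ih => exact mem_upclosed ih

/-- A good connected graph has cover pebbling number at least σ(u) for every vertex. -/
lemma sigma_le_of_good (hK : K.Connected) (hgood : IsGood K) (u : V) :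
    ∑ w, 2 ^ K.dist u w ≤ coverPebblingNumber K := by
  obtain ⟨a, ha⟩ := hgood
  have hsa : 1 ≤ ∑ w : V, 2 ^ K.dist a w := by
    calc 1 = 2 ^ K.dist a a := by simp [SimpleGraph.dist_self]
      _ ≤ ∑ w : V, 2 ^ K.dist a w :=
        Finset.single_le_sum (f := fun w => 2 ^ K.dist a w) (fun i _ => Nat.zero_le _)
          (Finset.mem_univ a)
  by_cases hS : {N | ∀ D : V → ℕ, ∑ v, D v = N → Coverable K D}.Nonempty
  · by_contra hlt
    push_neg at hlt
    have hmem : coverPebblingNumber K ∈ {N | ∀ D : V → ℕ, ∑ v, D v = N → Coverable K D} :=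
      Nat.sInf_mem hS
    have hmem' : (∑ w, 2 ^ K.dist u w) - 1 ∈
        {N | ∀ D : V → ℕ, ∑ v, D v = N → Coverable K D} :=
      upclosed hmem (by omega)
    apply not_coverable_sigma hK u
    apply hmem'
    rw [Finset.sum_ite_eq' Finset.univ u (fun _ => (∑ w, 2 ^ K.dist u w) - 1)]
    simp
  · exfalso
    rw [Set.not_nonempty_iff_eq_empty] at hS
    rw [coverPebblingNumber, hS, Nat.sInf_empty] at ha
    omega

end Aux

section Dist

variable {Vg Vh : Type*} {G : SimpleGraph Vg} {H : SimpleGraph Vh}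

lemma boxProd_walk_le {s t : Vg × Vh} (hGc : G.Connected) (hHc : H.Connected)
    (p : (G □ H).Walk s t) : G.dist s.1 t.1 + H.dist s.2 t.2 ≤ p.length := by
  induction p with
  | nil => simp [SimpleGraph.dist_self]
  | @cons u v w h q ih =>
    rw [SimpleGraph.Walk.length_cons]
    rcases SimpleGraph.boxProd_adj.mp h with ⟨h1, h2⟩ | ⟨h1, h2⟩
    · have ht : G.dist u.1 w.1 ≤ G.dist u.1 v.1 + G.dist v.1 w.1 := hGc.dist_triangle
      have hd : G.dist u.1 v.1 ≤ 1 := by simpa using SimpleGraph.dist_le h1.toWalk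
      rw [h2] at *
      omega
    · have ht : H.dist u.2 w.2 ≤ H.dist u.2 v.2 + H.dist v.2 w.2 := hHc.dist_triangle
      have hd : H.dist u.2 v.2 ≤ 1 := by simpa using SimpleGraph.dist_le h1.toWalk
      rw [h2] at *
      omega

lemma boxProd_dist (hGc : G.Connected) (hHc : H.Connected) (a w : Vg) (b x : Vh) :
    (G □ H).dist (a, b) (w, x) = G.dist a w + H.dist b x := by
  apply le_antisymm
  · obtain ⟨pa, hpa⟩ := hGc.exists_walk_length_eq_dist a w
    obtain ⟨pb, hpb⟩ := hHc.exists_walk_length_eq_dist b x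
    have h := SimpleGraph.dist_le ((pa.boxProdLeft H b).append (pb.boxProdRight G w))
    rw [SimpleGraph.Walk.length_append] at h
    simp only [SimpleGraph.Walk.boxProdLeft, SimpleGraph.Walk.boxProdRight,
      SimpleGraph.Walk.length_map, SimpleGraph.Walk.length_map, hpa, hpb] at h
    exact h.trans_eq (congrArg₂ (· + ·) ((SimpleGraph.Walk.length_map _ pa).trans hpa)
      ((SimpleGraph.Walk.length_map _ pb).trans hpb))
  · obtain ⟨p, hp⟩ := (hGc.boxProd hHc).exists_walk_length_eq_dist (a, b) (w, x)
    have := boxProd_walk_le hGc hHc p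
    rw [hp] at this
    exact this

lemma boxProd_sigma [Fintype Vg] [Fintype Vh] (hGc : G.Connected) (hHc : H.Connected)
    (a : Vg) (b : Vh) :
    ∑ p : Vg × Vh, 2 ^ (G □ H).dist (a, b) p
      = (∑ w : Vg, 2 ^ G.dist a w) * (∑ x : Vh, 2 ^ H.dist b x) := by
  rw [Fintype.sum_prod_type, Finset.sum_mul_sum]
  apply Finset.sum_congr rfl
  intro w _
  apply Finset.sum_congr rfl
  intro x _
  rw [boxProd_dist hGc hHc, pow_add]

end Dist

theorem good_prod_iff {Vg Vh : Type*}
    [DecidableEq Vg] [Fintype Vg] [DecidableEq Vh] [Fintype Vh]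
    (G : SimpleGraph Vg) (H : SimpleGraph Vh)
    (hGc : G.Connected) (hHc : H.Connected) (hG : IsGood G) (hH : IsGood H) :
    coverPebblingNumber (G □ H) = coverPebblingNumber G * coverPebblingNumber H ↔
      IsGood (G □ H) := by
  obtain ⟨a, ha⟩ := hG
  obtain ⟨b, hb⟩ := hH
  constructor
  · intro h
    exact ⟨(a, b), by rw [h, ha, hb, boxProd_sigma hGc hHc]⟩
  · rintro ⟨p, hp⟩
    have hp' : coverPebblingNumber (G □ H)
        = (∑ w : Vg, 2 ^ G.dist p.1 w) * (∑ x : Vh, 2 ^ H.dist p.2 x) := by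
      rw [hp, ← boxProd_sigma hGc hHc p.1 p.2]
    apply le_antisymm
    · rw [hp']
      exact Nat.mul_le_mul (sigma_le_of_good hGc ⟨a, ha⟩ p.1)
        (sigma_le_of_good hHc ⟨b, hb⟩ p.2)
    · rw [ha, hb, ← boxProd_sigma hGc hHc a b]
      exact sigma_le_of_good (hGc.boxProd hHc) ⟨p, hp⟩ (a, b)
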